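/- Let M ⊆ [0,∞] be a closed set containing ∞, let η ∈ M with η < ∞, and let φ : [0,∞] × [0,∞) → ℝ satisfy: (i) for each t ∈ M, the map m ↦ φ(t,m) is nonincreasing and continuous on [0,∞); (ii) φ is left-continuous along M: whenever (t_n) is a nondecreasing sequence in M with t_n → t, then φ(t_n, m) → φ(t, m) for every m ≥ 0. For m ≥ 0 define σ(m) = inf{ t ∈ M : t ≥ η and φ(t, m) ≤ 0 }, and assume the infimum is attained for every m, i.e. σ(m) ∈ M and φ(σ(m), m) ≤ 0. Then σ : [0,∞) → [η, ∞] is nonincreasing and right-continuous. -/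

import Mathlib

open Set Filter Topology MeasureTheory
open scoped ENNReal

/-- Lemma 3.1 of the paper, pathwise form.
`σ(m) = inf{ t ∈ M : t ≥ η, φ(t,m) ≤ 0 }` is nonincreasing and right-continuous in `m`. -/
theorem gittins_sigma_antitone_rightContinuous
    (M : Set ℝ≥0∞) (hMclosed : IsClosed M) (hMtop : ∞ ∈ M)
    (η : ℝ≥0∞) (hηM : η ∈ M) (hηfin : η < ∞)
    (φ : ℝ≥0∞ → ℝ → ℝ)
    (hφanti : ∀ t ∈ M, AntitoneOn (φ t) (Ici (0:ℝ)))
    (hφcont : ∀ t ∈ M, ContinuousOn (φ t) (Ici (0:ℝ)))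
    (hφqlc : ∀ (tn : ℕ → ℝ≥0∞) (t : ℝ≥0∞), (∀ n, tn n ∈ M) → Monotone tn →
      Tendsto tn atTop (𝓝 t) → ∀ m : ℝ, 0 ≤ m →
        Tendsto (fun n => φ (tn n) m) atTop (𝓝 (φ t m)))
    (σ : ℝ → ℝ≥0∞)
    (hσdef : ∀ m : ℝ, σ m = sInf {t | t ∈ M ∧ η ≤ t ∧ φ t m ≤ 0})
    (hσattained : ∀ m : ℝ, 0 ≤ m → σ m ∈ M ∧ φ (σ m) m ≤ 0) :
    (∀ m : ℝ, 0 ≤ m → η ≤ σ m) ∧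
    AntitoneOn σ (Ici (0:ℝ)) ∧
    (∀ m : ℝ, 0 ≤ m → ContinuousWithinAt σ (Ici m) m) := by

  have h1 : ∀ m : ℝ, η ≤ σ m := by
    intro m
    rw [hσdef]
    exact le_sInf fun t ht => ht.2.1
  have hanti : AntitoneOn σ (Ici (0:ℝ)) := by
    intro a ha b hb hab
    rw [hσdef, hσdef]
    exact sInf_le_sInf fun t ht => ⟨ht.1, ht.2.1, le_trans (hφanti t ht.1 ha hb hab) ht.2.2⟩
  refine ⟨fun m _ => h1 m, hanti, ?_⟩
  intro m hm
  set ms : ℕ → ℝ := fun n => m + 1 / (n + 1) with hms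
  have hgt : ∀ n, m < ms n := by
    intro n
    have : (0:ℝ) < 1 / (n + 1) := by positivity
    simpa [hms] using this
  have hm0 : ∀ n, 0 ≤ ms n := fun n => hm.trans (hgt n).le
  have hmanti : Antitone ms := by
    intro a b hab
    have : (1:ℝ) / (b + 1) ≤ 1 / (a + 1) := by
      apply one_div_le_one_div_of_le (by positivity)
      exact_mod_cast add_le_add_left (Nat.cast_le.mpr hab) 1
    simpa [hms] using add_le_add_left this m
  have hmlim : Tendsto ms atTop (𝓝 m) := by
    have h0 : Tendsto (fun n : ℕ => 1 / ((n:ℝ) + 1)) atTop (𝓝 0) :=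
      tendsto_one_div_add_atTop_nhds_zero_nat
    have := tendsto_const_nhds.add h0 (f := fun _ : ℕ => m)
    simpa [hms, one_div] using this
  set t : ℕ → ℝ≥0∞ := fun n => σ (ms n) with ht
  have htM : ∀ n, t n ∈ M := fun n => (hσattained _ (hm0 n)).1
  have hmono : Monotone t := fun a b hab => hanti (hm0 b) (hm0 a) (hmanti hab)
  set L : ℝ≥0∞ := ⨆ n, t n with hL
  have htL : Tendsto t atTop (𝓝 L) := tendsto_atTop_iSup hmono
  have hLM : L ∈ M := hMclosed.mem_of_tendsto htL (Eventually.of_forall htM)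
  have hk : ∀ k, φ L (ms k) ≤ 0 := by
    intro k
    have hqt := hφqlc t L htM hmono htL (ms k) (hm0 k)
    refine le_of_tendsto hqt ?_
    filter_upwards [eventually_ge_atTop k] with n hn
    calc φ (t n) (ms k) ≤ φ (t n) (ms n) :=
          hφanti (t n) (htM n) (hm0 n) (hm0 k) (hmanti hn)
      _ ≤ 0 := (hσattained _ (hm0 n)).2
  have hLm : φ L m ≤ 0 := by
    have hmsW : Tendsto ms atTop (𝓝[Ici (0:ℝ)] m) :=
      tendsto_nhdsWithin_iff.mpr ⟨hmlim, Eventually.of_forall hm0⟩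
    have := (hφcont L hLM m hm).tendsto.comp hmsW
    exact le_of_tendsto this (Eventually.of_forall hk)
  have hσleL : σ m ≤ L := by
    rw [hσdef]
    exact sInf_le ⟨hLM, (h1 (ms 0)).trans (le_iSup t 0), hLm⟩
  have hLle : L ≤ σ m := iSup_le fun n => hanti hm (hm0 n) (hgt n).le
  have hLeq : L = σ m := le_antisymm hLle hσleL
  rw [ContinuousWithinAt, ← Set.Ioi_insert, nhdsWithin_insert, tendsto_sup]
  refine ⟨tendsto_pure_nhds σ m, ?_⟩
  rw [tendsto_order]
  constructor
  · intro a ha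
    rw [← hLeq, hL, lt_iSup_iff] at ha
    obtain ⟨n, hn⟩ := ha
    filter_upwards [Ioc_mem_nhdsGT_of_mem ⟨le_refl m, hgt n⟩] with x hx
    exact hn.trans_le (hanti (hm.trans hx.1.le) (hm0 n) hx.2)
  · intro b hb
    filter_upwards [self_mem_nhdsWithin] with x hx
    exact lt_of_le_of_lt (hanti hm (hm.trans (le_of_lt hx)) (le_of_lt hx)) hb
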